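/- arXiv:1805.03405 — 2 statements merged into one kernel-verified Lean document; each statement's English description precedes it below -/
import Mathlib

section
/- For every finite simple graph G, the following statements are equivalent: (1) G is a threshold graph; (2) the vertex cover hypergraph VC(G) is 1-Sperner; (3) the vertex cover hypergraph VC(G) is a threshold hypergraph; (4) the vertex cover hypergraph VC(G) is 2-asummable. -/
open Finset

open scoped Classical

/-- A hypergraph (given by its set of hyperedges, each a finite set of vertices)
is 1-Sperner if every two distinct hyperedges `e` and `f` satisfy
`min |e \ f| |f \ e| = 1`. -/
def OneSperner {V : Type*} [DecidableEq V] (E : Set (Finset V)) : Prop :=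
  ∀ e ∈ E, ∀ f ∈ E, e ≠ f → min (e \ f).card (f \ e).card = 1

/-- A set of vertices `X` is dependent in the hypergraph with hyperedge set `E`
if it contains some hyperedge; it is independent otherwise. -/
def HypDep {V : Type*} (E : Set (Finset V)) (X : Finset V) : Prop :=
  ∃ e ∈ E, e ⊆ X

/-- A hypergraph is threshold if there are nonnegative integer vertex weights and a
threshold such that a vertex set has weight at least the threshold iff it contains
a hyperedge. -/
def HypThreshold {V : Type*} [Fintype V] (E : Set (Finset V)) : Prop :=
  ∃ (w : V → ℕ) (t : ℕ), ∀ X : Finset V, (t ≤ ∑ x ∈ X, w x) ↔ HypDep E X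

/-- The characteristic vector of a finite vertex set. -/
def chiVec {V : Type*} [DecidableEq V] (X : Finset V) : V → ℕ :=
  fun v => if v ∈ X then 1 else 0

/-- A hypergraph is 2-asummable if there are no two independent sets `A₁, A₂`
and two dependent sets `B₁, B₂` with `χ^{A₁} + χ^{A₂} = χ^{B₁} + χ^{B₂}`. -/
def TwoAsummable {V : Type*} [DecidableEq V] (E : Set (Finset V)) : Prop :=
  ¬ ∃ A₁ A₂ B₁ B₂ : Finset V,
      ¬ HypDep E A₁ ∧ ¬ HypDep E A₂ ∧ HypDep E B₁ ∧ HypDep E B₂ ∧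
      ∀ v, chiVec A₁ v + chiVec A₂ v = chiVec B₁ v + chiVec B₂ v

/-- A graph is threshold if there are nonnegative integer vertex weights and a threshold
such that a vertex set has weight at most the threshold iff it is an independent set. -/
def ThresholdGraph {V : Type*} [Fintype V] (G : SimpleGraph V) : Prop :=
  ∃ (w : V → ℕ) (t : ℕ), ∀ X : Finset V,
    ((∑ x ∈ X, w x) ≤ t ↔ ∀ u ∈ X, ∀ v ∈ X, ¬ G.Adj u v)

/-- A vertex cover of a graph: every edge has an endpoint in the set. -/
def IsVertexCover {V : Type*} (G : SimpleGraph V) (S : Finset V) : Prop :=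
  ∀ u v : V, G.Adj u v → u ∈ S ∨ v ∈ S

/-- The vertex cover hypergraph: hyperedges are the inclusion-minimal vertex covers. -/
def VCHyp {V : Type*} (G : SimpleGraph V) : Set (Finset V) :=
  {S | IsVertexCover G S ∧ ∀ T : Finset V, IsVertexCover G T → T ⊆ S → T = S}

/-- The clique hypergraph: hyperedges are the inclusion-maximal cliques. -/
def CliqueHyp {V : Type*} (G : SimpleGraph V) : Set (Finset V) :=
  {S | G.IsClique (S : Set V) ∧ ∀ T : Finset V, G.IsClique (T : Set V) → S ⊆ T → T = S}

/-- The closed neighborhood `N[v]` of a vertex, as a finite set. -/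
def closedNbhd {V : Type*} [Fintype V] [DecidableEq V] (G : SimpleGraph V)
    [DecidableRel G.Adj] (v : V) : Finset V :=
  insert v (G.neighborFinset v)

/-- The closed neighborhood hypergraph: hyperedges are the inclusion-minimal sets of
the form `N[v]`. -/
def NHyp {V : Type*} [Fintype V] [DecidableEq V] (G : SimpleGraph V)
    [DecidableRel G.Adj] : Set (Finset V) :=
  {S | (∃ v : V, S = closedNbhd G v) ∧
       ∀ v : V, closedNbhd G v ⊆ S → closedNbhd G v = S}

/-- A dominating set: every vertex is in the set or has a neighbor in it. -/
def IsDomSet {V : Type*} (G : SimpleGraph V) (D : Finset V) : Prop :=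
  ∀ v : V, v ∈ D ∨ ∃ u ∈ D, G.Adj u v

/-- The dominating set hypergraph: hyperedges are the inclusion-minimal dominating sets. -/
def DomHyp {V : Type*} (G : SimpleGraph V) : Set (Finset V) :=
  {D | IsDomSet G D ∧ ∀ T : Finset V, IsDomSet G T → T ⊆ D → T = D}

/-- A graph is domishold if there are nonnegative integer vertex weights and a threshold
such that a vertex set has weight at least the threshold iff it is a dominating set. -/
def Domishold {V : Type*} [Fintype V] (G : SimpleGraph V) : Prop :=
  ∃ (w : V → ℕ) (t : ℕ), ∀ X : Finset V, (t ≤ ∑ x ∈ X, w x) ↔ IsDomSet G X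

/-- `(K, I)` is a split partition of `G`: `K` is a clique, `I` an independent set,
they are disjoint and cover all vertices. -/
def IsSplitPartition {V : Type*} [Fintype V] (G : SimpleGraph V) (K I : Finset V) : Prop :=
  Disjoint K I ∧ K ∪ I = Finset.univ ∧ G.IsClique (K : Set V) ∧
    ∀ u ∈ I, ∀ v ∈ I, ¬ G.Adj u v

/-- The labeled split graph `(G, K, I)` is clique-Sperner: for `u, v ∈ K`,
`N(u) ∩ I ⊆ N(v) ∩ I` implies `u = v`. -/
def CliqueSperner {V : Type*} (G : SimpleGraph V) (K I : Finset V) : Prop :=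
  ∀ u ∈ K, ∀ v ∈ K,
    G.neighborSet u ∩ (I : Set V) ⊆ G.neighborSet v ∩ (I : Set V) → u = v

/-- The labeled split graph `(G, K, I)` is independent-Sperner: for `u, v ∈ I`,
`N(u) ⊆ N(v)` implies `u = v`. -/
def IndependentSperner {V : Type*} (G : SimpleGraph V) (K I : Finset V) : Prop :=
  ∀ u ∈ I, ∀ v ∈ I, G.neighborSet u ⊆ G.neighborSet v → u = v

/-- `(A, B)` is a bipartition of `G` into two disjoint independent sets covering
all vertices. -/
def IsBipartition {V : Type*} [Fintype V] (G : SimpleGraph V) (A B : Finset V) : Prop :=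
  Disjoint A B ∧ A ∪ B = Finset.univ ∧
    (∀ u ∈ A, ∀ v ∈ A, ¬ G.Adj u v) ∧ (∀ u ∈ B, ∀ v ∈ B, ¬ G.Adj u v)

/-- The labeled bigraph `(G, A, B)` is right-Sperner: for `u, v ∈ B`,
`N(u) ⊆ N(v)` implies `u = v`. -/
def RightSperner {V : Type*} (G : SimpleGraph V) (A B : Finset V) : Prop :=
  ∀ u ∈ B, ∀ v ∈ B, G.neighborSet u ⊆ G.neighborSet v → u = v

/-- The graph `2P₃`: disjoint union of the paths `0-1-2` and `3-4-5`. -/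
def twoP3 : SimpleGraph (Fin 6) :=
  SimpleGraph.fromRel (fun u v =>
    (u, v) ∈ ([(0,1),(1,2),(3,4),(4,5)] : List (Fin 6 × Fin 6)))

/-- The graph `H`: obtained from `2P₃` (paths `0-1-2` and `3-4-5`) by adding the
edge `1-4` between the two middle vertices. -/
def graphH : SimpleGraph (Fin 6) :=
  SimpleGraph.fromRel (fun u v =>
    (u, v) ∈ ([(0,1),(1,2),(3,4),(4,5),(1,4)] : List (Fin 6 × Fin 6)))

/-- The domination number: minimum size of a dominating set. -/
noncomputable def gamma {W : Type*} [Fintype W] (G : SimpleGraph W) : ℕ :=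
  sInf {n | ∃ D : Finset W, IsDomSet G D ∧ D.card = n}

/-- The total domination number: minimum size of a total dominating set. -/
noncomputable def gammaT {W : Type*} [Fintype W] (G : SimpleGraph W) : ℕ :=
  sInf {n | ∃ D : Finset W, (∀ v : W, ∃ u ∈ D, G.Adj u v) ∧ D.card = n}

/-- The connected domination number: minimum size of a connected dominating set. -/
noncomputable def gammaC {W : Type*} [Fintype W] (G : SimpleGraph W) : ℕ :=
  sInf {n | ∃ D : Finset W, IsDomSet G D ∧ (G.induce (D : Set W)).Connected ∧ D.card = n}

/-- The co-occurrence graph of a hypergraph: two distinct vertices are adjacent iff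
some hyperedge contains both. -/
def coOccurrenceGraph {W : Type*} (E : Set (Finset W)) : SimpleGraph W where
  Adj u v := u ≠ v ∧ ∃ e ∈ E, u ∈ e ∧ v ∈ e
  symm := by
    refine ⟨?_⟩
    rintro u v ⟨h, e, he, hu, hv⟩
    exact ⟨h.symm, e, he, hv, hu⟩
  loopless := by
    refine ⟨?_⟩
    rintro u ⟨h, -⟩
    exact h rfl

/-- The edge-clique split graph of a hypergraph `(V, E)`: vertex set `E ⊕ V`, the
hyperedges form a clique, the vertices an independent set, and `v ∈ V` is adjacent
to `e ∈ E` iff `v ∈ e`. -/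
def edgeCliqueGraph {V : Type*} (E : Finset (Finset V)) :
    SimpleGraph ({e // e ∈ E} ⊕ V) where
  Adj x y :=
    match x, y with
    | Sum.inl e, Sum.inl f => e ≠ f
    | Sum.inl e, Sum.inr v => v ∈ (e : Finset V)
    | Sum.inr v, Sum.inl e => v ∈ (e : Finset V)
    | Sum.inr _, Sum.inr _ => False
  symm := by
    refine ⟨?_⟩
    rintro (e | u) (f | v) h
    · exact Ne.symm h
    · exact h
    · exact h
    · exact h.elim
  loopless := by
    refine ⟨?_⟩
    rintro (e | v) h
    · exact h rfl
    · exact h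


section Aux

variable {V : Type*} [Fintype V] [DecidableEq V]

/-- Independence of a vertex set in a graph. -/
def GIndep (G : SimpleGraph V) (X : Finset V) : Prop :=
  ∀ u ∈ X, ∀ v ∈ X, ¬ G.Adj u v

/-- No alternating 4-cycle. -/
def NoAlt (G : SimpleGraph V) : Prop :=
  ¬ ∃ a b c d : V, G.Adj a b ∧ G.Adj c d ∧ a ≠ c ∧ b ≠ d ∧ ¬ G.Adj a c ∧ ¬ G.Adj b d

lemma cover_iff_compl_indep (G : SimpleGraph V) (X : Finset V) :
    IsVertexCover G X ↔ GIndep G Xᶜ := by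
  constructor
  · intro h u hu v hv hadj
    rcases h u v hadj with h' | h'
    · exact (Finset.mem_compl.1 hu) h'
    · exact (Finset.mem_compl.1 hv) h'
  · intro h u v hadj
    by_contra hc
    push_neg at hc
    exact h u (Finset.mem_compl.2 hc.1) v (Finset.mem_compl.2 hc.2) hadj

lemma exists_minimal_cover (G : SimpleGraph V) :
    ∀ X : Finset V, IsVertexCover G X → ∃ e ∈ VCHyp G, e ⊆ X := by
  intro X
  induction X using Finset.strongInductionOn with
  | _ X ih =>
    intro hX
    by_cases hmin : ∀ T : Finset V, IsVertexCover G T → T ⊆ X → T = X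
    · exact ⟨X, ⟨hX, hmin⟩, Finset.Subset.refl X⟩
    · push_neg at hmin
      obtain ⟨T, hT, hTX, hne⟩ := hmin
      obtain ⟨e, he, heT⟩ := ih T (Finset.ssubset_iff_subset_ne.2 ⟨hTX, hne⟩) hT
      exact ⟨e, he, heT.trans hTX⟩

lemma dep_iff_cover (G : SimpleGraph V) (X : Finset V) :
    HypDep (VCHyp G) X ↔ IsVertexCover G X := by
  constructor
  · rintro ⟨e, ⟨hec, -⟩, heX⟩ u v hadj
    rcases hec u v hadj with h | h
    · exact Or.inl (heX h)
    · exact Or.inr (heX h)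
  · exact exists_minimal_cover G X

lemma sum_compl_eq (w : V → ℕ) (X : Finset V) :
    ∑ x ∈ Xᶜ, w x = ∑ x ∈ (Finset.univ : Finset V), w x - ∑ x ∈ X, w x := by
  have h := Finset.sum_add_sum_compl X w
  omega

lemma indep_iff_compl_cover (G : SimpleGraph V) (X : Finset V) :
    GIndep G X ↔ IsVertexCover G Xᶜ := by
  rw [cover_iff_compl_indep, compl_compl]

end Aux


section Aux2

variable {V : Type*} [Fintype V] [DecidableEq V]

lemma threshold_iff_indep (G : SimpleGraph V) :
    ThresholdGraph G ↔ ∃ (w : V → ℕ) (t : ℕ), ∀ X : Finset V,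
      ((∑ x ∈ X, w x) ≤ t ↔ GIndep G X) := Iff.rfl

lemma graph_to_hyp (G : SimpleGraph V) (h : ThresholdGraph G) : HypThreshold (VCHyp G) := by
  obtain ⟨w, t, hw⟩ := h
  refine ⟨w, (∑ x ∈ (Finset.univ : Finset V), w x) - t, fun X => ?_⟩
  rw [dep_iff_cover, cover_iff_compl_indep]
  unfold GIndep
  rw [← hw Xᶜ, sum_compl_eq]
  have h1 := Finset.sum_add_sum_compl X w
  omega

lemma hyp_to_graph (G : SimpleGraph V) (h : HypThreshold (VCHyp G)) : ThresholdGraph G := by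
  obtain ⟨w, t, hw⟩ := h
  have htW : t ≤ ∑ x ∈ (Finset.univ : Finset V), w x := by
    refine (hw Finset.univ).2 ?_
    rw [dep_iff_cover]
    intro u v _
    exact Or.inl (Finset.mem_univ u)
  refine ⟨w, (∑ x ∈ (Finset.univ : Finset V), w x) - t, fun X => ?_⟩
  have h2 : GIndep G X ↔ t ≤ ∑ x ∈ Xᶜ, w x := by
    rw [indep_iff_compl_cover, ← dep_iff_cover, ← hw Xᶜ]
  unfold GIndep at h2
  rw [h2, sum_compl_eq]
  have h1 := Finset.sum_add_sum_compl X w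
  omega

lemma chi_sum (w : V → ℕ) (X : Finset V) :
    ∑ v ∈ (Finset.univ : Finset V), chiVec X v * w v = ∑ x ∈ X, w x := by
  rw [← Finset.sum_filter_add_sum_filter_not Finset.univ (· ∈ X)]
  have h1 : ∀ v ∈ Finset.univ.filter (· ∈ X), chiVec X v * w v = w v := by
    intro v hv
    simp only [Finset.mem_filter] at hv
    simp [chiVec, hv.2]
  have h2 : ∀ v ∈ Finset.univ.filter (¬ · ∈ X), chiVec X v * w v = 0 := by
    intro v hv
    simp only [Finset.mem_filter] at hv
    simp [chiVec, hv.2]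
  rw [Finset.sum_congr rfl h1, Finset.sum_congr rfl h2, Finset.filter_mem_eq_inter]
  simp

lemma hyp_to_asummable (E : Set (Finset V)) (h : HypThreshold E) : TwoAsummable E := by
  obtain ⟨w, t, hw⟩ := h
  rintro ⟨A₁, A₂, B₁, B₂, hA1, hA2, hB1, hB2, hchi⟩
  rw [← hw] at hA1 hA2 hB1 hB2
  have key : ∑ x ∈ A₁, w x + ∑ x ∈ A₂, w x = ∑ x ∈ B₁, w x + ∑ x ∈ B₂, w x := by
    rw [← chi_sum w A₁, ← chi_sum w A₂, ← chi_sum w B₁, ← chi_sum w B₂,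
      ← Finset.sum_add_distrib, ← Finset.sum_add_distrib]
    apply Finset.sum_congr rfl
    intro v _
    rw [← add_mul, ← add_mul, hchi v]
  omega

lemma alt_distinct {G : SimpleGraph V} {a b c d : V} (hab : G.Adj a b) (hcd : G.Adj c d)
    (hac : a ≠ c) (hbd : b ≠ d) (hnac : ¬ G.Adj a c) (hnbd : ¬ G.Adj b d) :
    a ≠ b ∧ a ≠ d ∧ b ≠ c ∧ c ≠ d := by
  refine ⟨G.ne_of_adj hab, ?_, ?_, G.ne_of_adj hcd⟩
  · rintro rfl; exact hnac hcd.symm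
  · rintro rfl; exact hnbd hcd

lemma asummable_to_noalt (G : SimpleGraph V) (h : TwoAsummable (VCHyp G)) : NoAlt G := by
  rintro ⟨a, b, c, d, hab, hcd, hac, hbd, hnac, hnbd⟩
  obtain ⟨hab', had', hbc', hcd'⟩ := alt_distinct hab hcd hac hbd hnac hnbd
  apply h
  refine ⟨({a, b} : Finset V)ᶜ, ({c, d} : Finset V)ᶜ, ({a, c} : Finset V)ᶜ,
    ({b, d} : Finset V)ᶜ, ?_, ?_, ?_, ?_, ?_⟩
  · intro hdep
    rw [dep_iff_cover] at hdep
    rcases hdep a b hab with h' | h' <;> simp at h' <;> tauto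
  · intro hdep
    rw [dep_iff_cover] at hdep
    rcases hdep c d hcd with h' | h' <;> simp at h' <;> tauto
  · rw [dep_iff_cover, cover_iff_compl_indep, compl_compl]
    intro u hu v hv hadj
    simp only [Finset.mem_insert, Finset.mem_singleton] at hu hv
    rcases hu with rfl | rfl <;> rcases hv with rfl | rfl
    · exact G.loopless.irrefl _ hadj
    · exact hnac hadj
    · exact hnac hadj.symm
    · exact G.loopless.irrefl _ hadj
  · rw [dep_iff_cover, cover_iff_compl_indep, compl_compl]
    intro u hu v hv hadj
    simp only [Finset.mem_insert, Finset.mem_singleton] at hu hv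
    rcases hu with rfl | rfl <;> rcases hv with rfl | rfl
    · exact G.loopless.irrefl _ hadj
    · exact hnbd hadj
    · exact hnbd hadj.symm
    · exact G.loopless.irrefl _ hadj
  · intro v
    simp only [chiVec, Finset.mem_compl, Finset.mem_insert, Finset.mem_singleton]
    by_cases h1 : v = a <;> by_cases h2 : v = b <;> by_cases h3 : v = c <;>
      by_cases h4 : v = d <;> simp_all

lemma threshold_to_noalt (G : SimpleGraph V) (h : ThresholdGraph G) : NoAlt G := by
  rintro ⟨a, b, c, d, hab, hcd, hac, hbd, hnac, hnbd⟩
  obtain ⟨hab', had', hbc', hcd'⟩ := alt_distinct hab hcd hac hbd hnac hnbd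
  obtain ⟨w, t, hw⟩ := h
  have h1 : w a + w c ≤ t := by
    have := (hw {a, c}).2 ?_
    · rwa [Finset.sum_pair hac] at this
    · intro u hu v hv hadj
      simp only [Finset.mem_insert, Finset.mem_singleton] at hu hv
      rcases hu with rfl | rfl <;> rcases hv with rfl | rfl
      · exact G.loopless.irrefl _ hadj
      · exact hnac hadj
      · exact hnac hadj.symm
      · exact G.loopless.irrefl _ hadj
  have h2 : w b + w d ≤ t := by
    have := (hw {b, d}).2 ?_
    · rwa [Finset.sum_pair hbd] at this
    · intro u hu v hv hadj
      simp only [Finset.mem_insert, Finset.mem_singleton] at hu hv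
      rcases hu with rfl | rfl <;> rcases hv with rfl | rfl
      · exact G.loopless.irrefl _ hadj
      · exact hnbd hadj
      · exact hnbd hadj.symm
      · exact G.loopless.irrefl _ hadj
  have h3 : ¬ (w a + w b ≤ t) := by
    intro hle
    rw [← Finset.sum_pair hab'] at hle
    exact (hw {a, b}).1 hle a (by simp) b (by simp) hab
  have h4 : ¬ (w c + w d ≤ t) := by
    intro hle
    rw [← Finset.sum_pair hcd'] at hle
    exact (hw {c, d}).1 hle c (by simp) d (by simp) hcd
  omega

end Aux2


section Aux3

variable {V : Type*} [Fintype V] [DecidableEq V]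

/-- Neighborhood as a finset. -/
noncomputable def myN (G : SimpleGraph V) (u : V) : Finset V :=
  Finset.univ.filter (fun x => G.Adj u x)

lemma mem_myN {G : SimpleGraph V} {u x : V} : x ∈ myN G u ↔ G.Adj u x := by
  simp [myN]

lemma comp_nonadj {G : SimpleGraph V} (hna : NoAlt G) {u v : V} (hne : u ≠ v)
    (h : ¬ G.Adj u v) : myN G u ⊆ myN G v ∨ myN G v ⊆ myN G u := by
  by_contra hc
  push_neg at hc
  obtain ⟨x, hxu, hxv⟩ := Finset.not_subset.1 hc.1
  obtain ⟨y, hyv, hyu⟩ := Finset.not_subset.1 hc.2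
  rw [mem_myN] at hxu hyv
  rw [mem_myN] at hxv hyu
  refine hna ⟨u, x, y, v, hxu, hyv.symm, ?_, ?_, hyu, fun ha => hxv ha.symm⟩
  · rintro rfl; exact h hyv.symm
  · rintro rfl; exact h hxu

lemma comp_adj {G : SimpleGraph V} (hna : NoAlt G) {u v : V} (h : G.Adj u v) :
    myN G u \ {v} ⊆ myN G v \ {u} ∨ myN G v \ {u} ⊆ myN G u \ {v} := by
  by_contra hc
  push_neg at hc
  obtain ⟨x, hx1, hx2⟩ := Finset.not_subset.1 hc.1
  obtain ⟨y, hy1, hy2⟩ := Finset.not_subset.1 hc.2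
  rw [Finset.mem_sdiff, mem_myN, Finset.mem_singleton] at hx1 hy1
  rw [Finset.mem_sdiff, mem_myN, Finset.mem_singleton, not_and_or, not_not] at hx2 hy2
  have hxu : x ≠ u := fun he => G.loopless.irrefl u (he ▸ hx1.1)
  have hyv : y ≠ v := fun he => G.loopless.irrefl v (he ▸ hy1.1)
  have hxv : ¬ G.Adj v x := by rcases hx2 with h' | h'; exact h'; exact absurd h' hxu
  have hyu : ¬ G.Adj u y := by rcases hy2 with h' | h'; exact h'; exact absurd h' hyv
  refine hna ⟨u, x, y, v, hx1.1, hy1.1.symm, ?_, ?_, hyu, fun ha => hxv ha.symm⟩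
  · exact fun he => hy1.2 he.symm
  · exact hx1.2

lemma exists_special {G : SimpleGraph V} (hna : NoAlt G) [Nonempty V] :
    ∃ v : V, (∀ u, ¬ G.Adj v u) ∨ (∀ u, u ≠ v → G.Adj v u) := by
  by_cases hiso : ∃ v : V, ∀ u, ¬ G.Adj v u
  · obtain ⟨v, hv⟩ := hiso; exact ⟨v, Or.inl hv⟩
  push_neg at hiso
  obtain ⟨v, -, hvmax⟩ := Finset.exists_max_image Finset.univ
    (fun x => (myN G x).card) Finset.univ_nonempty
  refine ⟨v, Or.inr fun u hne => ?_⟩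
  by_contra hnadj
  have hnadj' : ¬ G.Adj u v := fun h => hnadj h.symm
  have hNuv : myN G u ⊆ myN G v := by
    rcases comp_nonadj hna hne hnadj' with h | h
    · exact h
    · exact (Finset.eq_of_subset_of_card_le h (hvmax u (Finset.mem_univ u))) ▸
        Finset.Subset.refl _
  obtain ⟨y, hy⟩ := hiso u
  have hyNv : y ∈ myN G v := hNuv (mem_myN.2 hy)
  have hadjvy : G.Adj v y := mem_myN.1 hyNv
  have huNy : u ∈ myN G y \ {v} := by
    rw [Finset.mem_sdiff, mem_myN, Finset.mem_singleton]
    exact ⟨hy.symm, hne⟩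
  have hcontra : u ∈ myN G v \ {y} → False := by
    intro hmem
    rw [Finset.mem_sdiff, mem_myN] at hmem
    exact hnadj hmem.1
  rcases comp_adj hna hadjvy with h | h
  · -- myN v \ {y} ⊆ myN y \ {v}; use cardinality to reverse
    have hvy : v ∈ myN G y := mem_myN.2 hadjvy.symm
    have hyv : y ∈ myN G v := hyNv
    have c1 : (myN G v \ {y}).card = (myN G v).card - 1 := by
      rw [Finset.card_sdiff_of_subset (Finset.singleton_subset_iff.2 hyv), Finset.card_singleton]
    have c2 : (myN G y \ {v}).card = (myN G y).card - 1 := by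
      rw [Finset.card_sdiff_of_subset (Finset.singleton_subset_iff.2 hvy), Finset.card_singleton]
    have hcard : (myN G y).card ≤ (myN G v).card := hvmax y (Finset.mem_univ y)
    have hpos : 0 < (myN G y).card := Finset.card_pos.2 ⟨v, hvy⟩
    have heq := Finset.eq_of_subset_of_card_le h (by omega)
    exact hcontra (heq ▸ huNy)
  · exact hcontra (h huNy)

lemma noalt_threshold_aux : ∀ (n : ℕ) (W : Type*) [Fintype W] [DecidableEq W]
    (G : SimpleGraph W), Fintype.card W ≤ n → NoAlt G →
    ∃ (w : W → ℕ) (t : ℕ), (∀ v, 0 < w v) ∧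
      ∀ X : Finset W, ((∑ x ∈ X, w x) ≤ t ↔ GIndep G X) := by
  intro n
  induction n with
  | zero =>
    intro W _ _ G hcard _
    have : IsEmpty W := Fintype.card_eq_zero_iff.1 (Nat.le_zero.1 hcard)
    refine ⟨fun _ => 1, 0, fun v => this.elim v, fun X => ?_⟩
    have hX : X = ∅ := Finset.eq_empty_of_forall_notMem (fun x _ => this.elim x)
    subst hX
    simp [GIndep]
  | succ n ih =>
    intro W _ _ G hcard hna
    by_cases hle : Fintype.card W ≤ n
    · exact ih W G hle hna
    have hpos : 0 < Fintype.card W := by omega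
    have hne : Nonempty W := Fintype.card_pos_iff.1 hpos
    obtain ⟨v₀, hv₀⟩ := exists_special hna
    have hcard' : Fintype.card {x : W // x ≠ v₀} ≤ n := by
      have h2 : Fintype.card {x : W // x ≠ v₀}
          = (Finset.univ.filter (fun x : W => x ≠ v₀)).card := Fintype.card_subtype _
      rw [Finset.filter_ne', Finset.card_erase_of_mem (Finset.mem_univ v₀),
        Finset.card_univ] at h2
      omega
    set G' : SimpleGraph {x : W // x ≠ v₀} := G.comap Subtype.val with hG'
    have hna' : NoAlt G' := by
      rintro ⟨a, b, c, d, hab, hcd, hac, hbd, hnac, hnbd⟩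
      exact hna ⟨a.val, b.val, c.val, d.val, hab, hcd,
        fun h => hac (Subtype.ext h), fun h => hbd (Subtype.ext h), hnac, hnbd⟩
    obtain ⟨w', t', hw'pos, hw'⟩ := ih {x : W // x ≠ v₀} G' hcard' hna'
    set X' : Finset W → Finset {x : W // x ≠ v₀} :=
      fun X => Finset.univ.filter (fun a => a.val ∈ X) with hX'
    have hmemX' : ∀ (X : Finset W) (a : {x : W // x ≠ v₀}), a ∈ X' X ↔ a.val ∈ X := by
      intro X a; simp [hX']
    have hmap : ∀ X : Finset W, (X' X).map (Function.Embedding.subtype _)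
        = X.filter (fun x => ¬ x = v₀) := by
      intro X
      ext x
      simp only [Finset.mem_map, Finset.mem_filter, Function.Embedding.coe_subtype, hX']
      constructor
      · rintro ⟨a, ha, rfl⟩
        simp only [Finset.mem_filter, Finset.mem_univ, true_and] at ha
        exact ⟨ha, a.prop⟩
      · rintro ⟨hx, hne⟩
        exact ⟨⟨x, hne⟩, by simp [hx], rfl⟩
    have hup : ∀ X : Finset W, GIndep G X → GIndep G' (X' X) := by
      intro X h a ha b hb hadj
      exact h a.val ((hmemX' X a).1 ha) b.val ((hmemX' X b).1 hb) hadj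
    have hsplit : ∀ (c₀ : ℕ) (X : Finset W),
        ∑ x ∈ X, (fun x => if h : x = v₀ then c₀ else 2 * w' ⟨x, h⟩) x
          = (if v₀ ∈ X then c₀ else 0) + 2 * ∑ a ∈ X' X, w' a := by
      intro c₀ X
      rw [← Finset.sum_filter_add_sum_filter_not X (fun x => x = v₀)]
      congr 1
      · rw [Finset.filter_eq']
        by_cases h : v₀ ∈ X
        · rw [if_pos h, if_pos h, Finset.sum_singleton, dif_pos rfl]
        · rw [if_neg h, if_neg h, Finset.sum_empty]
      · rw [← hmap X, Finset.sum_map, Finset.mul_sum]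
        apply Finset.sum_congr rfl
        intro a _
        simp only [Function.Embedding.coe_subtype]
        exact dif_neg a.prop
    rcases hv₀ with hiso | hdom
    · -- isolated vertex
      refine ⟨fun x => if h : x = v₀ then 1 else 2 * w' ⟨x, h⟩, 2 * t' + 1, ?_, ?_⟩
      · intro v
        by_cases h : v = v₀
        · simp [h]
        · simp only [dif_neg h]
          have := hw'pos ⟨v, h⟩
          omega
      · intro X
        rw [hsplit 1 X]
        have hiff : GIndep G X ↔ GIndep G' (X' X) := by
          constructor
          · exact hup X
          · intro h u hu v hv hadj
            by_cases h1 : u = v₀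
            · exact hiso v (h1 ▸ hadj)
            by_cases h2 : v = v₀
            · exact hiso u (h2 ▸ hadj.symm)
            exact h ⟨u, h1⟩ ((hmemX' X _).2 hu) ⟨v, h2⟩ ((hmemX' X _).2 hv) hadj
        rw [hiff, ← hw' (X' X)]
        split_ifs <;> omega
    · -- dominating vertex
      refine ⟨fun x => if h : x = v₀ then 2 * t' + 1 else 2 * w' ⟨x, h⟩, 2 * t' + 1, ?_, ?_⟩
      · intro v
        by_cases h : v = v₀
        · simp [h]
        · simp only [dif_neg h]
          have := hw'pos ⟨v, h⟩
          omega
      · intro X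
        rw [hsplit (2 * t' + 1) X]
        by_cases hv : v₀ ∈ X
        · rw [if_pos hv]
          have hiff : GIndep G X ↔ X' X = ∅ := by
            constructor
            · intro h
              apply Finset.eq_empty_of_forall_notMem
              intro a ha
              exact h v₀ hv a.val ((hmemX' X a).1 ha) (hdom a.val a.prop)
            · intro h u hu v hvin hadj
              have hu' : u = v₀ := by
                by_contra hc
                exact (Finset.eq_empty_iff_forall_notMem.1 h ⟨u, hc⟩)
                  ((hmemX' X _).2 hu)
              have hv' : v = v₀ := by
                by_contra hc
                exact (Finset.eq_empty_iff_forall_notMem.1 h ⟨v, hc⟩)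
                  ((hmemX' X _).2 hvin)
              rw [hu', hv'] at hadj
              exact G.loopless.irrefl v₀ hadj
          have hzero : ∑ a ∈ X' X, w' a = 0 ↔ X' X = ∅ := by
            constructor
            · intro h
              by_contra hc
              obtain ⟨a, ha⟩ := Finset.nonempty_iff_ne_empty.2 hc
              have h1 : 0 < ∑ a ∈ X' X, w' a :=
                Finset.sum_pos' (fun i _ => Nat.zero_le _) ⟨a, ha, hw'pos a⟩
              omega
            · intro h; rw [h, Finset.sum_empty]
          rw [hiff, ← hzero]
          omega
        · rw [if_neg hv]
          have hiff : GIndep G X ↔ GIndep G' (X' X) := by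
            constructor
            · exact hup X
            · intro h u hu v hvin hadj
              have h1 : u ≠ v₀ := fun he => hv (he ▸ hu)
              have h2 : v ≠ v₀ := fun he => hv (he ▸ hvin)
              exact h ⟨u, h1⟩ ((hmemX' X _).2 hu) ⟨v, h2⟩ ((hmemX' X _).2 hvin) hadj
          rw [hiff, ← hw' (X' X)]
          omega

lemma noalt_to_threshold (G : SimpleGraph V) (h : NoAlt G) : ThresholdGraph G := by
  obtain ⟨w, t, -, hw⟩ := noalt_threshold_aux (Fintype.card V) V G le_rfl h
  exact ⟨w, t, fun X => hw X⟩

end Aux3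


section Aux4

variable {V : Type*} [Fintype V] [DecidableEq V]

lemma exists_maximal_indep (G : SimpleGraph V) (S : Finset V) (hS : GIndep G S) :
    ∃ M : Finset V, S ⊆ M ∧ GIndep G M ∧ ∀ M', GIndep G M' → M ⊆ M' → M' = M := by
  set F := Finset.univ.filter (fun T : Finset V => S ⊆ T ∧ GIndep G T) with hF
  have hne : F.Nonempty := ⟨S, by simp [hF, hS]⟩
  obtain ⟨M, hM, hmax⟩ := Finset.exists_max_image F Finset.card hne
  simp only [hF, Finset.mem_filter, Finset.mem_univ, true_and] at hM
  refine ⟨M, hM.1, hM.2, ?_⟩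
  intro M' hM' hsub
  have hM'F : M' ∈ F := by
    simp only [hF, Finset.mem_filter, Finset.mem_univ, true_and]
    exact ⟨hM.1.trans hsub, hM'⟩
  exact (Finset.eq_of_subset_of_card_le hsub (hmax M' hM'F)).symm

lemma compl_maximal_mem_VCHyp (G : SimpleGraph V) {M : Finset V} (hM : GIndep G M)
    (hmax : ∀ M', GIndep G M' → M ⊆ M' → M' = M) : Mᶜ ∈ VCHyp G := by
  constructor
  · exact (indep_iff_compl_cover G M).1 hM
  · intro T hT hsub
    have h1 : GIndep G Tᶜ := (cover_iff_compl_indep G T).1 hT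
    have h2 : M ⊆ Tᶜ := by
      intro x hx
      rw [Finset.mem_compl]
      intro hxT
      exact (Finset.mem_compl.1 (hsub hxT)) hx
    have := hmax Tᶜ h1 h2
    rw [← this, compl_compl]

lemma minimal_cover_neighbor (G : SimpleGraph V) {f : Finset V} (hf : f ∈ VCHyp G)
    {x : V} (hx : x ∈ f) : ∃ y, y ∉ f ∧ G.Adj x y := by
  obtain ⟨hcov, hmin⟩ := hf
  have hnc : ¬ IsVertexCover G (f.erase x) := by
    intro hc
    have hEq := hmin _ hc (Finset.erase_subset x f)
    rw [← hEq] at hx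
    exact Finset.notMem_erase x f hx
  unfold IsVertexCover at hnc
  push_neg at hnc
  obtain ⟨u, v, hadj, hu, hv⟩ := hnc
  by_cases hux : u = x
  · subst hux
    have hvx : v ≠ u := fun h => G.loopless.irrefl u (h ▸ hadj)
    have hvf : v ∉ f := fun h => hv (Finset.mem_erase.2 ⟨hvx, h⟩)
    exact ⟨v, hvf, hadj⟩
  · have huf : u ∉ f := fun h => hu (Finset.mem_erase.2 ⟨hux, h⟩)
    have hvf : v ∈ f := by
      rcases hcov u v hadj with h | h
      · exact absurd h huf
      · exact h
    have hvx : v = x := by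
      by_contra hc
      exact hv (Finset.mem_erase.2 ⟨hc, hvf⟩)
    subst hvx
    exact ⟨u, huf, hadj.symm⟩

lemma noalt_to_onesperner (G : SimpleGraph V) (hna : NoAlt G) : OneSperner (VCHyp G) := by
  intro e he f hf hne
  have hfind : GIndep G fᶜ := (cover_iff_compl_indep G f).1 hf.1
  have heind : GIndep G eᶜ := (cover_iff_compl_indep G e).1 he.1
  have h1 : (e \ f).Nonempty := by
    rw [Finset.sdiff_nonempty]
    intro hsub
    exact hne (hf.2 e he.1 hsub)
  have h2 : (f \ e).Nonempty := by
    rw [Finset.sdiff_nonempty]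
    intro hsub
    exact hne (he.2 f hf.1 hsub).symm
  have hPQ : ∀ x ∈ f \ e, ∃ y ∈ e \ f, G.Adj x y := by
    intro x hx
    rw [Finset.mem_sdiff] at hx
    obtain ⟨y, hyf, hadj⟩ := minimal_cover_neighbor G hf hx.1
    have hye : y ∈ e := by
      by_contra hc
      rcases he.1 x y hadj with h | h
      · exact hx.2 h
      · exact hc h
    exact ⟨y, Finset.mem_sdiff.2 ⟨hye, hyf⟩, hadj⟩
  have hQP : ∀ y ∈ e \ f, ∃ x ∈ f \ e, G.Adj y x := by
    intro y hy
    rw [Finset.mem_sdiff] at hy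
    obtain ⟨x, hxe, hadj⟩ := minimal_cover_neighbor G he hy.1
    have hxf : x ∈ f := by
      by_contra hc
      rcases hf.1 y x hadj with h | h
      · exact hy.2 h
      · exact hc h
    exact ⟨x, Finset.mem_sdiff.2 ⟨hxf, hxe⟩, hadj⟩
  have hPind : ∀ u ∈ f \ e, ∀ v ∈ f \ e, ¬ G.Adj u v := by
    intro u hu v hv hadj
    rw [Finset.mem_sdiff] at hu hv
    rcases he.1 u v hadj with h | h
    · exact hu.2 h
    · exact hv.2 h
  have hQind : ∀ u ∈ e \ f, ∀ v ∈ e \ f, ¬ G.Adj u v := by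
    intro u hu v hv hadj
    rw [Finset.mem_sdiff] at hu hv
    rcases hf.1 u v hadj with h | h
    · exact hu.2 h
    · exact hv.2 h
  by_contra hmin
  have hc1 : 1 ≤ (e \ f).card := Finset.card_pos.2 h1
  have hc2 : 1 ≤ (f \ e).card := Finset.card_pos.2 h2
  have h2le : 2 ≤ (e \ f).card ∧ 2 ≤ (f \ e).card := by omega
  obtain ⟨a, ha, c, hc, hac⟩ := Finset.one_lt_card.1 h2le.2
  obtain ⟨b, hb, hadj_ab⟩ := hPQ a ha
  obtain ⟨d, hd, hadj_cd⟩ := hPQ c hc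
  by_cases hbd : b = d
  · subst hbd
    have hb' : ∃ b' ∈ e \ f, b' ≠ b := by
      obtain ⟨x, hx, y, hy, hxy⟩ := Finset.one_lt_card.1 h2le.1
      by_cases hxb : x = b
      · exact ⟨y, hy, fun h => hxy (hxb ▸ h ▸ rfl)⟩
      · exact ⟨x, hx, hxb⟩
    obtain ⟨b', hb'mem, hbb'⟩ := hb'
    obtain ⟨a', ha', hadj_b'a'⟩ := hQP b' hb'mem
    by_cases haa' : a' = a
    · subst haa'
      exact hna ⟨c, b, a', b', hadj_cd, hadj_b'a'.symm, fun h => hac h.symm,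
        fun h => hbb' h.symm, hPind c hc a' ha, hQind b hb b' hb'mem⟩
    · exact hna ⟨a, b, a', b', hadj_ab, hadj_b'a'.symm, fun h => haa' h.symm,
        fun h => hbb' h.symm, hPind a ha a' ha', hQind b hb b' hb'mem⟩
  · exact hna ⟨a, b, c, d, hadj_ab, hadj_cd, hac, hbd, hPind a ha c hc, hQind b hb d hd⟩

lemma onesperner_to_noalt (G : SimpleGraph V) (h1s : OneSperner (VCHyp G)) : NoAlt G := by
  rintro ⟨a, b, c, d, hab, hcd, hac, hbd, hnac, hnbd⟩
  obtain ⟨hab', had', hbc', hcd'⟩ := alt_distinct hab hcd hac hbd hnac hnbd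
  have hind1 : GIndep G {a, c} := by
    intro u hu v hv hadj
    simp only [Finset.mem_insert, Finset.mem_singleton] at hu hv
    rcases hu with rfl | rfl <;> rcases hv with rfl | rfl
    · exact G.loopless.irrefl _ hadj
    · exact hnac hadj
    · exact hnac hadj.symm
    · exact G.loopless.irrefl _ hadj
  have hind2 : GIndep G {b, d} := by
    intro u hu v hv hadj
    simp only [Finset.mem_insert, Finset.mem_singleton] at hu hv
    rcases hu with rfl | rfl <;> rcases hv with rfl | rfl
    · exact G.loopless.irrefl _ hadj
    · exact hnbd hadj
    · exact hnbd hadj.symm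
    · exact G.loopless.irrefl _ hadj
  obtain ⟨M₁, hS1, hM1, hmax1⟩ := exists_maximal_indep G {a, c} hind1
  obtain ⟨M₂, hS2, hM2, hmax2⟩ := exists_maximal_indep G {b, d} hind2
  have he : M₁ᶜ ∈ VCHyp G := compl_maximal_mem_VCHyp G hM1 hmax1
  have hf : M₂ᶜ ∈ VCHyp G := compl_maximal_mem_VCHyp G hM2 hmax2
  have haM1 : a ∈ M₁ := hS1 (by simp)
  have hcM1 : c ∈ M₁ := hS1 (by simp)
  have hbM2 : b ∈ M₂ := hS2 (by simp)
  have hdM2 : d ∈ M₂ := hS2 (by simp)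
  have hbM1 : b ∉ M₁ := fun h => hM1 a haM1 b h hab
  have hdM1 : d ∉ M₁ := fun h => hM1 c hcM1 d h hcd
  have haM2 : a ∉ M₂ := fun h => hM2 a h b hbM2 hab
  have hcM2 : c ∉ M₂ := fun h => hM2 c h d hdM2 hcd
  have hbmem : b ∈ M₁ᶜ \ M₂ᶜ := by
    rw [Finset.mem_sdiff, Finset.mem_compl, Finset.mem_compl, not_not]
    exact ⟨hbM1, hbM2⟩
  have hdmem : d ∈ M₁ᶜ \ M₂ᶜ := by
    rw [Finset.mem_sdiff, Finset.mem_compl, Finset.mem_compl, not_not]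
    exact ⟨hdM1, hdM2⟩
  have hamem : a ∈ M₂ᶜ \ M₁ᶜ := by
    rw [Finset.mem_sdiff, Finset.mem_compl, Finset.mem_compl, not_not]
    exact ⟨haM2, haM1⟩
  have hcmem : c ∈ M₂ᶜ \ M₁ᶜ := by
    rw [Finset.mem_sdiff, Finset.mem_compl, Finset.mem_compl, not_not]
    exact ⟨hcM2, hcM1⟩
  have hne : M₁ᶜ ≠ M₂ᶜ := by
    intro h
    rw [h] at hbmem
    simp at hbmem
  have hcard1 : 2 ≤ (M₁ᶜ \ M₂ᶜ).card := Finset.one_lt_card.2 ⟨b, hbmem, d, hdmem, hbd⟩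
  have hcard2 : 2 ≤ (M₂ᶜ \ M₁ᶜ).card := Finset.one_lt_card.2 ⟨a, hamem, c, hcmem, hac⟩
  have := h1s M₁ᶜ he M₂ᶜ hf hne
  omega

end Aux4

theorem stmt0 {V : Type*} [Fintype V] [DecidableEq V] (G : SimpleGraph V) :
    [ThresholdGraph G, OneSperner (VCHyp G), HypThreshold (VCHyp G),
      TwoAsummable (VCHyp G)].TFAE := by
  tfae_have 1 → 3 := graph_to_hyp G
  tfae_have 3 → 1 := hyp_to_graph G
  tfae_have 3 → 4 := hyp_to_asummable _
  tfae_have 4 → 1 := fun h => noalt_to_threshold G (asummable_to_noalt G h)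
  tfae_have 1 → 2 := fun h => noalt_to_onesperner G (threshold_to_noalt G h)
  tfae_have 2 → 1 := fun h => noalt_to_threshold G (onesperner_to_noalt G h)
  tfae_finish
end

section
/- Let H₁ = (V₁, E₁) and H₂ = (V₂, E₂) be vertex-disjoint hypergraphs and let z ∉ V₁ ∪ V₂. If the gluing H₁ ⊙ H₂ of H₁ and H₂ (with respect to the new vertex z) is a 1-Sperner hypergraph, then both H₁ and H₂ are 1-Sperner. -/
open Finset

open scoped Classical

theorem stmt18 {V : Type*} [DecidableEq V] (V₁ V₂ : Finset V) (z : V)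
    (E₁ E₂ : Set (Finset V))
    (hE₁ : ∀ e ∈ E₁, e ⊆ V₁) (hE₂ : ∀ e ∈ E₂, e ⊆ V₂)
    (hdisj : Disjoint V₁ V₂) (hz : z ∉ V₁ ∪ V₂)
    (hglue : OneSperner
      ({g | ∃ e ∈ E₁, g = insert z e} ∪ {g | ∃ e ∈ E₂, g = V₁ ∪ e})) :
    OneSperner E₁ ∧ OneSperner E₂ := by
  simp only [Finset.mem_union, not_or] at hz
  obtain ⟨hz1, hz2⟩ := hz
  constructor
  · intro e he f hf hef
    have hze : z ∉ e := fun h => hz1 (hE₁ e he h)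
    have hzf : z ∉ f := fun h => hz1 (hE₁ f hf h)
    have h1 : (insert z e : Finset V) \ insert z f = e \ f := by
      ext x
      simp only [Finset.mem_sdiff, Finset.mem_insert, not_or]
      constructor
      · rintro ⟨(rfl | hx), hne, hnf⟩
        · exact absurd rfl hne
        · exact ⟨hx, hnf⟩
      · rintro ⟨hx, hnf⟩
        exact ⟨Or.inr hx, fun h => hze (h ▸ hx), hnf⟩
    have h2 : (insert z f : Finset V) \ insert z e = f \ e := by
      ext x
      simp only [Finset.mem_sdiff, Finset.mem_insert, not_or]
      constructor
      · rintro ⟨(rfl | hx), hne, hnf⟩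
        · exact absurd rfl hne
        · exact ⟨hx, hnf⟩
      · rintro ⟨hx, hnf⟩
        exact ⟨Or.inr hx, fun h => hzf (h ▸ hx), hnf⟩
    have hne : (insert z e : Finset V) ≠ insert z f := by
      intro h
      apply hef
      have : (insert z e : Finset V).erase z = (insert z f).erase z := by rw [h]
      rwa [Finset.erase_insert hze, Finset.erase_insert hzf] at this
    have := hglue (insert z e) (Or.inl ⟨e, he, rfl⟩) (insert z f)
      (Or.inl ⟨f, hf, rfl⟩) hne
    rwa [h1, h2] at this
  · intro e he f hf hef
    have hd1 : ∀ x ∈ e, x ∉ V₁ := fun x hx h =>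
      (Finset.disjoint_left.mp hdisj) h (hE₂ e he hx)
    have hd2 : ∀ x ∈ f, x ∉ V₁ := fun x hx h =>
      (Finset.disjoint_left.mp hdisj) h (hE₂ f hf hx)
    have h1 : (V₁ ∪ e) \ (V₁ ∪ f) = e \ f := by
      ext x
      simp only [Finset.mem_sdiff, Finset.mem_union, not_or]
      constructor
      · rintro ⟨(hx | hx), hnv, hnf⟩
        · exact absurd hx hnv
        · exact ⟨hx, hnf⟩
      · rintro ⟨hx, hnf⟩
        exact ⟨Or.inr hx, hd1 x hx, hnf⟩
    have h2 : (V₁ ∪ f) \ (V₁ ∪ e) = f \ e := by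
      ext x
      simp only [Finset.mem_sdiff, Finset.mem_union, not_or]
      constructor
      · rintro ⟨(hx | hx), hnv, hnf⟩
        · exact absurd hx hnv
        · exact ⟨hx, hnf⟩
      · rintro ⟨hx, hnf⟩
        exact ⟨Or.inr hx, hd2 x hx, hnf⟩
    have hne : (V₁ ∪ e : Finset V) ≠ V₁ ∪ f := by
      intro h
      apply hef
      ext x
      constructor
      · intro hx
        have : x ∈ V₁ ∪ f := h ▸ Finset.mem_union_right _ hx
        rcases Finset.mem_union.mp this with h' | h'
        · exact absurd h' (hd1 x hx)
        · exact h'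
      · intro hx
        have : x ∈ V₁ ∪ e := h ▸ Finset.mem_union_right _ hx
        rcases Finset.mem_union.mp this with h' | h'
        · exact absurd h' (hd2 x hx)
        · exact h'
    have := hglue (V₁ ∪ e) (Or.inr ⟨e, he, rfl⟩) (V₁ ∪ f)
      (Or.inr ⟨f, hf, rfl⟩) hne
    rwa [h1, h2] at this
end
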